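/- Let X be a finite set of alternatives, k ≥ 1 an integer, and (𝓑, c) a data set with 𝓑 = {B₁, …, Bₙ} finite. Then (𝓑, c) is rationalizable with k-th order CLA if and only if there exists a feasible configuration for (𝓑, c, k). -/

import Mathlib

/-- A strict preference relation: complete on distinct elements, transitive, asymmetric. -/
def StrictPref {X : Type*} (r : X → X → Prop) : Prop :=
  (∀ x y : X, x ≠ y → r x y ∨ r y x) ∧
  (∀ x y z : X, r x y → r y z → r x z) ∧
  (∀ x y : X, r x y → ¬ r y x)

/-- An attention filter: for every nonempty budget `B`, `Γ B` is a nonempty subset of `B`,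
and removing an unconsidered alternative does not change the consideration set. -/
def AttentionFilter {X : Type*} [DecidableEq X] (Γ : Finset X → Finset X) : Prop :=
  ∀ B : Finset X, B.Nonempty →
    (Γ B).Nonempty ∧ Γ B ⊆ B ∧ ∀ x ∈ B, x ∉ Γ B → Γ (B.erase x) = Γ B

/-- `(r, Γ)` is a rationalizing pair for the data set `(𝓑, c)` with `k`-th order CLA. -/
def Rationalizes {X : Type*} [DecidableEq X] (𝓑 : Set (Finset X)) (c : Finset X → X)
    (k : ℕ) (r : X → X → Prop) (Γ : Finset X → Finset X) : Prop :=
  StrictPref r ∧ AttentionFilter Γ ∧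
  (∀ B : Finset X, B.Nonempty → min B.card k ≤ (Γ B).card) ∧
  ∀ B ∈ 𝓑, c B ∈ Γ B ∧ ∀ y ∈ Γ B, y ≠ c B → r (c B) y

/-- The data set `(𝓑, c)` is rationalizable with `k`-th order CLA. -/
def RationalizableCLA {X : Type*} [DecidableEq X] (𝓑 : Set (Finset X))
    (c : Finset X → X) (k : ℕ) : Prop :=
  ∃ (r : X → X → Prop) (Γ : Finset X → Finset X), Rationalizes 𝓑 c k r Γ

/-- A feasible configuration for the finite data set `(B₁, …, Bₙ, c)` and threshold `k`
(the big-M-free formulation of the mixed integer program, with `A i = {x_j : δ i j = 1}`). -/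
def FeasibleConfig {X : Type*} [DecidableEq X] {n : ℕ} (B : Fin n → Finset X)
    (c : Finset X → X) (k : ℕ) (u : X → ℝ) (A : Fin n → Finset X) : Prop :=
  (∀ i, c (B i) ∈ A i) ∧ (∀ i, A i ⊆ B i) ∧
  (∀ i, ∀ y ∈ A i, y ≠ c (B i) → u y < u (c (B i))) ∧
  (∀ i, min k (B i).card ≤ (A i).card) ∧
  (∀ i j, c (B i) ≠ c (B j) → c (B i) ∈ B i ∩ B j → c (B j) ∈ B i ∩ B j →
    (A i ∩ (B i \ B j)).Nonempty ∨ (A j ∩ (B j \ B i)).Nonempty)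

/-! ### Auxiliary lemmas -/

/-- Shrinking a set while keeping the consideration set inside does not change attention. -/
lemma attention_shrink {X : Type*} [DecidableEq X] {Γ : Finset X → Finset X}
    (hΓ : AttentionFilter Γ) :
    ∀ (m : ℕ) (S T : Finset X), S.Nonempty → Γ S ⊆ T → T ⊆ S → (S \ T).card = m →
      Γ T = Γ S := by
  intro m
  induction m with
  | zero =>
    intro S T hS h1 h2 hc
    have hempty : S \ T = ∅ := Finset.card_eq_zero.mp hc
    have : T = S := by
      apply Finset.Subset.antisymm h2
      intro x hx
      by_contra hxT
      exact (Finset.notMem_empty x) (hempty ▸ Finset.mem_sdiff.mpr ⟨hx, hxT⟩)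
    rw [this]
  | succ m ih =>
    intro S T hS h1 h2 hc
    have hne : (S \ T).Nonempty := Finset.card_pos.mp (by omega)
    obtain ⟨x, hx⟩ := hne
    rw [Finset.mem_sdiff] at hx
    have hΓS := hΓ S hS
    have hxΓ : x ∉ Γ S := fun h => hx.2 (h1 h)
    have heq : Γ (S.erase x) = Γ S := hΓS.2.2 x hx.1 hxΓ
    have hT' : T ⊆ S.erase x := fun y hy =>
      Finset.mem_erase.mpr ⟨fun h => hx.2 (h ▸ hy), h2 hy⟩
    have hS' : (S.erase x).Nonempty := by
      obtain ⟨y, hy⟩ := hΓS.1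
      exact ⟨y, hT' (h1 hy)⟩
    have hsd : S.erase x \ T = (S \ T).erase x := by
      ext z
      simp only [Finset.mem_sdiff, Finset.mem_erase]
      tauto
    have hcard : (S.erase x \ T).card = m := by
      rw [hsd, Finset.card_erase_of_mem (Finset.mem_sdiff.mpr hx), hc]
      omega
    rw [← heq]
    exact ih (S.erase x) T hS' (by rw [heq]; exact h1) hT' hcard

/-- A lexicographic tie-break of a utility function is a strict preference. -/
lemma strictPref_lex {X : Type*} [Fintype X] [DecidableEq X] (u : X → ℝ) :
    StrictPref (fun x y => u y < u x ∨
      (u x = u y ∧ ((Fintype.equivFin X) x : ℕ) < (Fintype.equivFin X) y)) := by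
  refine ⟨?_, ?_, ?_⟩
  · intro x y hxy
    rcases lt_trichotomy (u x) (u y) with h | h | h
    · exact Or.inr (Or.inl h)
    · have hne : ((Fintype.equivFin X) x : ℕ) ≠ ((Fintype.equivFin X) y : ℕ) := by
        intro hcon
        exact hxy ((Fintype.equivFin X).injective (Fin.val_injective hcon))
      rcases lt_or_gt_of_ne hne with h' | h'
      · exact Or.inl (Or.inr ⟨h, h'⟩)
      · exact Or.inr (Or.inr ⟨h.symm, h'⟩)
    · exact Or.inl (Or.inl h)
  · intro x y z hxy hyz
    rcases hxy with h1 | ⟨h1, h1'⟩ <;> rcases hyz with h2 | ⟨h2, h2'⟩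
    · exact Or.inl (h2.trans h1)
    · exact Or.inl (h2 ▸ h1)
    · exact Or.inl (h1 ▸ h2)
    · exact Or.inr ⟨h1.trans h2, h1'.trans h2'⟩
  · intro x y hxy hyx
    rcases hxy with h1 | ⟨h1, h1'⟩ <;> rcases hyx with h2 | ⟨h2, h2'⟩
    · exact absurd h2 (not_lt.mpr h1.le)
    · exact absurd h1 (not_lt.mpr h2.ge)
    · exact absurd h2 (not_lt.mpr h1.ge)
    · omega

/-- One merging step: absorb every consideration set whose pair condition forces equality. -/
def mergeStep {X : Type*} [DecidableEq X] {n : ℕ} (B A : Fin n → Finset X) :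
    Fin n → Finset X :=
  fun i => A i ∪ (Finset.univ.filter (fun j => A i ∪ A j ⊆ B i ∩ B j)).biUnion A

lemma mem_mergeStep {X : Type*} [DecidableEq X] {n : ℕ} {B A : Fin n → Finset X}
    {i : Fin n} {x : X} :
    x ∈ mergeStep B A i ↔ x ∈ A i ∨ ∃ j, A i ∪ A j ⊆ B i ∩ B j ∧ x ∈ A j := by
  simp [mergeStep]

/-- The invariant maintained by the merging procedure. -/
def GoodFam {X : Type*} [DecidableEq X] {n : ℕ} (B : Fin n → Finset X) (c : Finset X → X)
    (u : X → ℝ) (A₀ A : Fin n → Finset X) : Prop :=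
  (∀ i, A₀ i ⊆ A i) ∧ (∀ i, A i ⊆ B i) ∧
  (∀ i, ∀ y ∈ A i, y ≠ c (B i) → u y < u (c (B i))) ∧
  (∀ i j, c (B i) ≠ c (B j) → c (B i) ∈ B i ∩ B j → c (B j) ∈ B i ∩ B j →
    (A i ∩ (B i \ B j)).Nonempty ∨ (A j ∩ (B j \ B i)).Nonempty)

lemma choice_eq_of_merge {X : Type*} [DecidableEq X] {n : ℕ} {B : Fin n → Finset X}
    {c : Finset X → X} {u : X → ℝ} {A₀ A : Fin n → Finset X}
    (h : GoodFam B c u A₀ A) (hc₀ : ∀ i, c (B i) ∈ A₀ i)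
    {i j : Fin n} (hij : A i ∪ A j ⊆ B i ∩ B j) : c (B i) = c (B j) := by
  obtain ⟨h1, h2, h3, h4⟩ := h
  by_contra hne
  have hci : c (B i) ∈ B i ∩ B j := hij (Finset.mem_union_left _ (h1 i (hc₀ i)))
  have hcj : c (B j) ∈ B i ∩ B j := hij (Finset.mem_union_right _ (h1 j (hc₀ j)))
  rcases h4 i j hne hci hcj with ⟨x, hx⟩ | ⟨x, hx⟩
  · rw [Finset.mem_inter, Finset.mem_sdiff] at hx
    exact hx.2.2 (Finset.mem_inter.mp (hij (Finset.mem_union_left _ hx.1))).2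
  · rw [Finset.mem_inter, Finset.mem_sdiff] at hx
    exact hx.2.2 (Finset.mem_inter.mp (hij (Finset.mem_union_right _ hx.1))).1

lemma goodFam_mergeStep {X : Type*} [DecidableEq X] {n : ℕ} {B : Fin n → Finset X}
    {c : Finset X → X} {u : X → ℝ} {A₀ A : Fin n → Finset X}
    (h : GoodFam B c u A₀ A) (hc₀ : ∀ i, c (B i) ∈ A₀ i) :
    GoodFam B c u A₀ (mergeStep B A) := by
  obtain ⟨h1, h2, h3, h4⟩ := h
  refine ⟨fun i => (h1 i).trans Finset.subset_union_left, ?_, ?_, ?_⟩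
  · intro i x hx
    rcases mem_mergeStep.mp hx with hx | ⟨j, hj, hx⟩
    · exact h2 i hx
    · exact (Finset.mem_inter.mp (hj (Finset.mem_union_right _ hx))).1
  · intro i y hy hne
    rcases mem_mergeStep.mp hy with hy | ⟨j, hj, hy⟩
    · exact h3 i y hy hne
    · have hcc : c (B i) = c (B j) := choice_eq_of_merge ⟨h1, h2, h3, h4⟩ hc₀ hj
      rw [hcc]
      exact h3 j y hy (hcc ▸ hne)
  · intro i j hne hci hcj
    rcases h4 i j hne hci hcj with h | h
    · exact Or.inl (h.mono (Finset.inter_subset_inter Finset.subset_union_left (le_refl _)))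
    · exact Or.inr (h.mono (Finset.inter_subset_inter Finset.subset_union_left (le_refl _)))

/-- Iterating the merge step reaches a fixed point satisfying the diamond property. -/
lemma exists_merged_fam {X : Type*} [Fintype X] [DecidableEq X] {n : ℕ}
    (B : Fin n → Finset X) (c : Finset X → X) (u : X → ℝ) (A₀ : Fin n → Finset X)
    (h0 : GoodFam B c u A₀ A₀) (hc₀ : ∀ i, c (B i) ∈ A₀ i) :
    ∃ A : Fin n → Finset X, GoodFam B c u A₀ A ∧
      ∀ i j, A i ∪ A j ⊆ B i ∩ B j → A i = A j := by
  classical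
  set F := mergeStep B with hF
  have hgood : ∀ t, GoodFam B c u A₀ (F^[t] A₀) := by
    intro t
    induction t with
    | zero => simpa using h0
    | succ t ih =>
      rw [Function.iterate_succ_apply']
      exact goodFam_mergeStep ih hc₀
  have key : ∃ t, F (F^[t] A₀) = F^[t] A₀ := by
    by_contra hcon
    push_neg at hcon
    set g : ℕ → ℕ := fun t => ∑ i, ((F^[t] A₀) i).card with hg
    have hsub : ∀ t i, (F^[t] A₀) i ⊆ (F^[t+1] A₀) i := by
      intro t i
      rw [Function.iterate_succ_apply']
      exact Finset.subset_union_left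
    have hlt : ∀ t, g t < g (t + 1) := by
      intro t
      have hne : F^[t+1] A₀ ≠ F^[t] A₀ := by
        rw [Function.iterate_succ_apply']
        exact hcon t
      obtain ⟨i, hi⟩ := Function.ne_iff.mp hne
      refine Finset.sum_lt_sum (fun i _ => Finset.card_le_card (hsub t i))
        ⟨i, Finset.mem_univ i, Finset.card_lt_card (lt_of_le_of_ne (hsub t i) (Ne.symm hi))⟩
    have hmono : StrictMono g := strictMono_nat_of_lt_succ hlt
    have hb : ∀ t, g t ≤ n * Fintype.card X := by
      intro t
      calc g t ≤ ∑ _i : Fin n, Fintype.card X :=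
            Finset.sum_le_sum (fun i _ => (Finset.card_le_univ _).trans_eq Finset.card_univ)
        _ = n * Fintype.card X := by simp [Finset.sum_const, mul_comm]
    have h1 := hmono.le_apply (x := n * Fintype.card X + 1)
    have h2 := hb (n * Fintype.card X + 1)
    omega
  obtain ⟨t, hfix⟩ := key
  refine ⟨F^[t] A₀, hgood t, ?_⟩
  intro i j hij
  have h1 : (F^[t] A₀) j ⊆ F (F^[t] A₀) i := fun x hx => mem_mergeStep.mpr (Or.inr ⟨j, hij, hx⟩)
  have h2 : (F^[t] A₀) i ⊆ F (F^[t] A₀) j := by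
    intro x hx
    refine mem_mergeStep.mpr (Or.inr ⟨i, ?_, hx⟩)
    rwa [Finset.union_comm, Finset.inter_comm]
  rw [hfix] at h1 h2
  exact Finset.Subset.antisymm h2 h1

/-- Sufficiency: a family with the diamond property yields a rationalizing pair. -/
lemma rationalizable_of_diamond {X : Type*} [Fintype X] [DecidableEq X] {n : ℕ}
    (B : Fin n → Finset X) (c : Finset X → X) (k : ℕ) (u : X → ℝ) (A : Fin n → Finset X)
    (hc : ∀ i, c (B i) ∈ A i) (hsub : ∀ i, A i ⊆ B i)
    (hu : ∀ i, ∀ y ∈ A i, y ≠ c (B i) → u y < u (c (B i)))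
    (hcard : ∀ i, min k (B i).card ≤ (A i).card)
    (hdiam : ∀ i j, A i ∪ A j ⊆ B i ∩ B j → A i = A j) :
    RationalizableCLA (Set.range B) c k := by
  classical
  refine ⟨fun x y => u y < u x ∨
      (u x = u y ∧ ((Fintype.equivFin X) x : ℕ) < (Fintype.equivFin X) y),
    fun S => if h : ∃ i, A i ⊆ S ∧ S ⊆ B i then A h.choose else S,
    strictPref_lex u, ?_, ?_, ?_⟩
  case _ =>
    -- attention filter
    intro S hS
    beta_reduce
    by_cases h : ∃ i, A i ⊆ S ∧ S ⊆ B i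
    · obtain ⟨i, h1, h2⟩ := h
      have hwd : ∀ T : Finset X, A i ⊆ T → T ⊆ B i →
          (if h : ∃ j, A j ⊆ T ∧ T ⊆ B j then A h.choose else T) = A i := by
        intro T hT1 hT2
        have hex : ∃ j, A j ⊆ T ∧ T ⊆ B j := ⟨i, hT1, hT2⟩
        rw [dif_pos hex]
        obtain ⟨h1', h2'⟩ := hex.choose_spec
        exact hdiam _ i ((Finset.union_subset h1' hT1).trans (Finset.subset_inter h2' hT2))
      have hΓS : (if h : ∃ j, A j ⊆ S ∧ S ⊆ B j then A h.choose else S) = A i := hwd S h1 h2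
      rw [hΓS]
      refine ⟨⟨c (B i), hc i⟩, h1, ?_⟩
      intro x hxS hxA
      have hA1 : A i ⊆ S.erase x := fun y hy =>
        Finset.mem_erase.mpr ⟨fun he => hxA (he ▸ hy), h1 hy⟩
      exact hwd (S.erase x) hA1 ((Finset.erase_subset x S).trans h2)
    · rw [dif_neg h]
      refine ⟨hS, le_refl _, ?_⟩
      intro x hx hx'
      exact absurd hx hx'
  case _ =>
    -- cardinality
    intro S hS
    beta_reduce
    by_cases h : ∃ i, A i ⊆ S ∧ S ⊆ B i
    · rw [dif_pos h]
      obtain ⟨h1, h2⟩ := h.choose_spec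
      calc min S.card k ≤ min k (B h.choose).card := by
            rw [min_comm]
            exact min_le_min (le_refl k) (Finset.card_le_card h2)
        _ ≤ (A h.choose).card := hcard _
    · rw [dif_neg h]
      exact min_le_left _ _
  case _ =>
    -- rationalization of the data
    rintro S ⟨i, rfl⟩
    beta_reduce
    have hex : ∃ j, A j ⊆ B i ∧ B i ⊆ B j := ⟨i, hsub i, le_refl _⟩
    have hΓ : (if h : ∃ j, A j ⊆ B i ∧ B i ⊆ B j then A h.choose else B i) = A i := by
      rw [dif_pos hex]
      obtain ⟨h1', h2'⟩ := hex.choose_spec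
      exact hdiam _ i ((Finset.union_subset h1' (hsub i)).trans
        (Finset.subset_inter h2' (le_refl _)))
    rw [hΓ]
    exact ⟨hc i, fun y hy hne => Or.inl (hu i y hy hne)⟩

theorem cla_iff_feasibleConfig {X : Type*} [Fintype X] [DecidableEq X] {n : ℕ}
    (B : Fin n → Finset X) (c : Finset X → X) (k : ℕ) (hk : 1 ≤ k)
    (hchoice : ∀ i, c (B i) ∈ B i) :
    RationalizableCLA (Set.range B) c k ↔
      ∃ (u : X → ℝ) (A : Fin n → Finset X), FeasibleConfig B c k u A := by
  classical
  constructor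
  · rintro ⟨r, Γ, ⟨hcomp, htrans, hasym⟩, hAF, hsize, hrat⟩
    refine ⟨fun x => ((Finset.univ.filter (fun y => r x y)).card : ℝ),
      fun i => Γ (B i), ?_, ?_, ?_, ?_, ?_⟩
    · intro i
      exact (hrat (B i) ⟨i, rfl⟩).1
    · intro i
      exact (hAF (B i) ⟨_, hchoice i⟩).2.1
    · intro i y hy hne
      have hr : r (c (B i)) y := (hrat (B i) ⟨i, rfl⟩).2 y hy hne
      have hlt : (Finset.univ.filter (fun z => r y z)).card <
          (Finset.univ.filter (fun z => r (c (B i)) z)).card := by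
        apply Finset.card_lt_card
        rw [Finset.ssubset_iff_of_subset]
        · exact ⟨y, Finset.mem_filter.mpr ⟨Finset.mem_univ y, hr⟩,
            fun hcon => hasym y y (Finset.mem_filter.mp hcon).2 (Finset.mem_filter.mp hcon).2⟩
        · intro z hz
          rw [Finset.mem_filter] at hz ⊢
          exact ⟨hz.1, htrans _ _ _ hr hz.2⟩
      show ((Finset.univ.filter (fun z => r y z)).card : ℝ) <
          ((Finset.univ.filter (fun z => r (c (B i)) z)).card : ℝ)
      exact_mod_cast hlt
    · intro i
      rw [min_comm]
      exact hsize (B i) ⟨_, hchoice i⟩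
    · intro i j hne hci hcj
      by_contra hcon
      push_neg at hcon
      obtain ⟨hcon1, hcon2⟩ := hcon
      have hBi : (B i).Nonempty := ⟨_, hchoice i⟩
      have hBj : (B j).Nonempty := ⟨_, hchoice j⟩
      have hsubi : Γ (B i) ⊆ B i ∩ B j := by
        intro x hx
        have hxB : x ∈ B i := (hAF (B i) hBi).2.1 hx
        refine Finset.mem_inter.mpr ⟨hxB, ?_⟩
        by_contra hxj
        exact (Finset.notMem_empty x) (hcon1 ▸
          Finset.mem_inter.mpr ⟨hx, Finset.mem_sdiff.mpr ⟨hxB, hxj⟩⟩)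
      have hsubj : Γ (B j) ⊆ B i ∩ B j := by
        intro x hx
        have hxB : x ∈ B j := (hAF (B j) hBj).2.1 hx
        refine Finset.mem_inter.mpr ⟨?_, hxB⟩
        by_contra hxi
        exact (Finset.notMem_empty x) (hcon2 ▸
          Finset.mem_inter.mpr ⟨hx, Finset.mem_sdiff.mpr ⟨hxB, hxi⟩⟩)
      have heqi : Γ (B i ∩ B j) = Γ (B i) :=
        attention_shrink hAF _ (B i) (B i ∩ B j) hBi hsubi Finset.inter_subset_left rfl
      have heqj : Γ (B i ∩ B j) = Γ (B j) :=
        attention_shrink hAF _ (B j) (B i ∩ B j) hBj hsubj Finset.inter_subset_right rfl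
      have hcji : c (B j) ∈ Γ (B i) := by
        rw [← heqi, heqj]
        exact (hrat (B j) ⟨j, rfl⟩).1
      have hcij : c (B i) ∈ Γ (B j) := by
        rw [← heqj, heqi]
        exact (hrat (B i) ⟨i, rfl⟩).1
      have h1 : r (c (B i)) (c (B j)) := (hrat (B i) ⟨i, rfl⟩).2 _ hcji (Ne.symm hne)
      have h2 : r (c (B j)) (c (B i)) := (hrat (B j) ⟨j, rfl⟩).2 _ hcij hne
      exact hasym _ _ h1 h2
  · rintro ⟨u, A, hcA, hsubA, huA, hcardA, hcondA⟩
    have h0 : GoodFam B c u A A := ⟨fun i => le_refl _, hsubA, huA, hcondA⟩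
    obtain ⟨Ast, ⟨g1, g2, g3, g4⟩, hdiam⟩ := exists_merged_fam B c u A h0 hcA
    exact rationalizable_of_diamond B c k u Ast (fun i => g1 i (hcA i)) g2 g3
      (fun i => (hcardA i).trans (Finset.card_le_card (g1 i))) hdiam
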